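/- Let a Euclidean triangle and a spherical triangle (on the unit sphere) have the same side lengths a, b, c, with the spherical triangle of diameter less than π/3. Then the spherical angle A' and Euclidean angle A opposite the side a satisfy |A' - A| ≤ 2(a + b + c)². -/

import Mathlib

open Real

lemma my_sin_ge_sub_cube {x : ℝ} (hx : 0 ≤ x) : x - x^3/6 ≤ Real.sin x := by
  have hd : ∀ y : ℝ, HasDerivAt (fun t => Real.sin t - t + t^3/6) (Real.cos y - 1 + y^2/2) y := by
    intro y
    have h1 : HasDerivAt (fun t : ℝ => t^3) (3*y^2) y := by simpa using hasDerivAt_pow 3 y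
    have h2 : HasDerivAt (fun t => Real.sin t - t + t^3/6) (Real.cos y - 1 + 3*y^2/6) y := ((Real.hasDerivAt_sin y).sub (hasDerivAt_id y)).add (h1.div_const 6)
    convert h2 using 1 ; ring
  have hmono : Monotone (fun t => Real.sin t - t + t^3/6) := by
    apply monotone_of_deriv_nonneg (fun y => (hd y).differentiableAt)
    intro y; rw [(hd y).deriv]
    nlinarith [Real.one_sub_sq_div_two_le_cos (x := y)]
  have h0 := hmono hx
  simp only [Real.sin_zero] at h0
  norm_num at h0
  linarith

lemma my_sin_facts {x : ℝ} (h0 : 0 < x) (h2 : x < 1.6) :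
    0 < Real.sin x ∧ Real.sin x ≤ x ∧ x - x^3/6 ≤ Real.sin x ∧ x ≤ 2 * Real.sin x ∧ 0 ≤ x - x^3/6 := by
  have hπ : x < π := lt_trans h2 (by linarith [Real.pi_gt_d6])
  have hs := my_sin_ge_sub_cube h0.le
  have hx2 : x^2 ≤ 2.56 := by nlinarith
  have hx3 : x^3 ≤ 2.56*x := by nlinarith [h0.le, hx2]
  exact ⟨Real.sin_pos_of_pos_of_lt_pi h0 hπ, Real.sin_le h0.le, hs, by linarith, by linarith⟩

lemma my_arccos_lip {x y K : ℝ} (hK : 0 < K) (hx : K ≤ 1 - x^2) (hy : K ≤ 1 - y^2) :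
    |Real.arccos y - Real.arccos x| ≤ |y - x| / Real.sqrt K := by
  have hmem : ∀ t ∈ Set.uIcc x y, K ≤ 1 - t^2 := by
    intro t ht
    rw [Set.mem_uIcc] at ht
    rcases ht with ⟨h1,h2⟩|⟨h1,h2⟩ <;> rcases le_or_gt t 0 with h3|h3 <;> nlinarith
  have hne : ∀ t ∈ Set.uIcc x y, t ≠ -1 ∧ t ≠ 1 := by
    intro t ht
    have := hmem t ht
    constructor <;> rintro rfl <;> nlinarith
  have hd : ∀ t ∈ Set.uIcc x y, HasDerivWithinAt Real.arcsin
      ((fun s => 1 / Real.sqrt (1 - s^2)) t) (Set.uIcc x y) t :=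
    fun t ht => (Real.hasDerivAt_arcsin (hne t ht).1 (hne t ht).2).hasDerivWithinAt
  have hbd : ∀ t ∈ Set.uIcc x y, ‖(fun s => 1 / Real.sqrt (1 - s^2)) t‖ ≤ 1 / Real.sqrt K := by
    intro t ht
    have h1 := hmem t ht
    rw [Real.norm_eq_abs, abs_of_nonneg (by positivity)]
    exact one_div_le_one_div_of_le (Real.sqrt_pos.2 hK) (Real.sqrt_le_sqrt h1)
  have key := (convex_uIcc x y).norm_image_sub_le_of_norm_hasDerivWithin_le hd hbd
    Set.left_mem_uIcc Set.right_mem_uIcc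
  rw [Real.norm_eq_abs, Real.norm_eq_abs] at key
  have harc : Real.arccos y - Real.arccos x = -(Real.arcsin y - Real.arcsin x) := by
    rw [Real.arccos, Real.arccos]; ring
  rw [harc, abs_neg, div_eq_inv_mul, ← one_div]
  exact key

set_option maxHeartbeats 4000000 in

/-- If a Euclidean triangle and a spherical triangle on the unit sphere have the same side
lengths `a, b, c`, all less than `π/3`, then the spherical angle `A'` and the Euclidean
angle `A` opposite the side `a` satisfy `|A' - A| ≤ 2(a+b+c)²`. -/
theorem spherical_euclidean_angle_comparison (a b c : ℝ)
    (ha : 0 < a) (hb : 0 < b) (hc : 0 < c)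
    (ha' : a < π / 3) (hb' : b < π / 3) (hc' : c < π / 3)
    (htri1 : a < b + c) (htri2 : b < a + c) (htri3 : c < a + b) :
    |Real.arccos ((Real.cos a - Real.cos b * Real.cos c) / (Real.sin b * Real.sin c))
        - Real.arccos ((b ^ 2 + c ^ 2 - a ^ 2) / (2 * b * c))| ≤ 2 * (a + b + c) ^ 2 := by
  have pi315 : π < 3.15 := by linarith [Real.pi_lt_d2]
  set p := (a+b+c)/2 with hp
  set q := (b+c-a)/2 with hq
  set u := (a+c-b)/2 with hu
  set v := (a+b-c)/2 with hv
  set Y := (Real.cos a - Real.cos b * Real.cos c) / (Real.sin b * Real.sin c) with hY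
  set X := (b ^ 2 + c ^ 2 - a ^ 2) / (2 * b * c) with hX
  clear_value p q u v Y X
  have hp0 : 0 < p := by rw [hp]; linarith
  have hq0 : 0 < q := by rw [hq]; linarith
  have hu0 : 0 < u := by rw [hu]; linarith
  have hv0 : 0 < v := by rw [hv]; linarith
  have hb16 : b < 1.6 := by linarith
  have hc16 : c < 1.6 := by linarith
  have hp16 : p < 1.6 := by rw [hp]; linarith
  have hq16 : q < 1.6 := by rw [hq]; linarith
  have hu16 : u < 1.6 := by rw [hu]; linarith
  have hv16 : v < 1.6 := by rw [hv]; linarith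
  obtain ⟨hsb0, hsb1, hsb2, hsb3, hsb4⟩ := my_sin_facts hb hb16
  obtain ⟨hsc0, hsc1, hsc2, hsc3, hsc4⟩ := my_sin_facts hc hc16
  obtain ⟨hsp0, hsp1, hsp2, hsp3, hsp4⟩ := my_sin_facts hp0 hp16
  obtain ⟨hsq0, hsq1, hsq2, hsq3, hsq4⟩ := my_sin_facts hq0 hq16
  obtain ⟨hsu0, hsu1, hsu2, hsu3, hsu4⟩ := my_sin_facts hu0 hu16
  obtain ⟨hsv0, hsv1, hsv2, hsv3, hsv4⟩ := my_sin_facts hv0 hv16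
  have hsbc0 : 0 < Real.sin b * Real.sin c := mul_pos hsb0 hsc0
  have hsbcne : Real.sin b * Real.sin c ≠ 0 := ne_of_gt hsbc0
  -- trig identities
  have e1 : 2 * (Real.sin u * Real.sin v)
      = Real.cos b * Real.cos c + Real.sin b * Real.sin c - Real.cos a := by
    have h2 : a = u + v := by rw [hu, hv]; ring
    have h3 : b - c = -(u - v) := by rw [hu, hv]; ring
    calc 2 * (Real.sin u * Real.sin v) = Real.cos (u - v) - Real.cos (u + v) := by
          rw [Real.cos_sub, Real.cos_add]; ring
      _ = Real.cos (b - c) - Real.cos a := by rw [h2, h3, Real.cos_neg]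
      _ = Real.cos b * Real.cos c + Real.sin b * Real.sin c - Real.cos a := by
          rw [Real.cos_sub]
  have e2 : 2 * (Real.sin p * Real.sin q)
      = Real.cos a - (Real.cos b * Real.cos c - Real.sin b * Real.sin c) := by
    have h2 : a = p - q := by rw [hp, hq]; ring
    have h3 : b + c = p + q := by rw [hp, hq]; ring
    calc 2 * (Real.sin p * Real.sin q) = Real.cos (p - q) - Real.cos (p + q) := by
          rw [Real.cos_sub, Real.cos_add]; ring
      _ = Real.cos a - Real.cos (b + c) := by rw [h2, h3]
      _ = Real.cos a - (Real.cos b * Real.cos c - Real.sin b * Real.sin c) := by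
          rw [Real.cos_add]
  have hY1 : (1 - Y) * (Real.sin b * Real.sin c) = 2 * (Real.sin u * Real.sin v) := by
    rw [hY]; field_simp; linear_combination -e1
  have hY2 : (1 + Y) * (Real.sin b * Real.sin c) = 2 * (Real.sin p * Real.sin q) := by
    rw [hY]; field_simp; linear_combination -e2
  have hX1 : (1 - X) * (b * c) = 2 * (u * v) := by
    rw [hX, hu, hv]; field_simp; ring
  have hX2 : (1 + X) * (b * c) = 2 * (p * q) := by
    rw [hX, hp, hq]; field_simp; ring

  -- the key difference quantity
  set E := Real.sin u * Real.sin v * (b*c) - u*v*(Real.sin b * Real.sin c) with hE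
  clear_value E
  have hsum2 : u*v + p*q = b*c := by rw [hu, hv, hp, hq]; ring
  have hsum : Real.sin u * Real.sin v + Real.sin p * Real.sin q = Real.sin b * Real.sin c := by
    linarith [e1, e2]
  have hEalt : E = p*q*(Real.sin b * Real.sin c) - Real.sin p * Real.sin q * (b*c) := by
    rw [hE]; linear_combination (b*c) * hsum - (Real.sin b * Real.sin c) * hsum2
  -- squared-size bounds
  have hbc2 : b^2 + c^2 ≤ (a+b+c)^2 := by
    linarith [sq_nonneg a, mul_pos ha hb, mul_pos ha hc, mul_pos hb hc]
  have huv2 : u^2 + v^2 ≤ (a+b+c)^2 := by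
    rw [hu, hv]
    linarith [sq_nonneg a, sq_nonneg b, sq_nonneg c, mul_pos ha hb, mul_pos ha hc, mul_pos hb hc]
  have hpq2 : p^2 + q^2 ≤ (a+b+c)^2 := by
    rw [hp, hq]
    linarith [sq_nonneg a, sq_nonneg b, sq_nonneg c, mul_pos ha hb, mul_pos ha hc, mul_pos hb hc]
  -- |E| <= u*v*(b*c)*S^2/6
  have hB1u : E ≤ u*v*(b*c)*(a+b+c)^2/6 := by
    have k1 : Real.sin u * Real.sin v ≤ u * v :=
      mul_le_mul hsu1 hsv1 hsv0.le hu0.le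
    have k2 : (b - b^3/6)*(c - c^3/6) ≤ Real.sin b * Real.sin c :=
      mul_le_mul hsb2 hsc2 hsc4 hsb0.le
    have k3 : u*v*((b - b^3/6)*(c - c^3/6)) ≤ u*v*(Real.sin b * Real.sin c) :=
      mul_le_mul_of_nonneg_left k2 (by positivity)
    have k4 : E ≤ u*v*(b*c) - u*v*((b - b^3/6)*(c - c^3/6)) := by
      rw [hE]
      have := mul_le_mul_of_nonneg_right k1 (by positivity : (0:ℝ) ≤ b*c)
      linarith
    have h5 : 0 ≤ u*v*(b*c)*((a+b+c)^2 - (b^2+c^2)) :=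
      mul_nonneg (by positivity) (by linarith)
    have h6 : (0:ℝ) ≤ u*v*(b^3*c^3) := by positivity
    linarith [k4, h5, h6]
  have hB1l : -(u*v*(b*c)*(a+b+c)^2/6) ≤ E := by
    have k1 : (u - u^3/6)*(v - v^3/6) ≤ Real.sin u * Real.sin v :=
      mul_le_mul hsu2 hsv2 hsv4 hsu0.le
    have k2 : u*v*(Real.sin b * Real.sin c) ≤ u*v*(b*c) :=
      mul_le_mul_of_nonneg_left (mul_le_mul hsb1 hsc1 hsc0.le hb.le) (by positivity)
    have k4 : (u - u^3/6)*(v - v^3/6)*(b*c) - u*v*(b*c) ≤ E := by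
      rw [hE]
      have := mul_le_mul_of_nonneg_right k1 (by positivity : (0:ℝ) ≤ b*c)
      linarith
    have h5 : 0 ≤ u*v*(b*c)*((a+b+c)^2 - (u^2+v^2)) :=
      mul_nonneg (by positivity) (by linarith)
    have h6 : (0:ℝ) ≤ (u^3*v^3)*(b*c) := by positivity
    linarith [k4, h5, h6]
  -- |E| <= p*q*(b*c)*S^2/6
  have hB2u : E ≤ p*q*(b*c)*(a+b+c)^2/6 := by
    have k1 : (p - p^3/6)*(q - q^3/6) ≤ Real.sin p * Real.sin q :=
      mul_le_mul hsp2 hsq2 hsq4 hsp0.le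
    have k2 : p*q*(Real.sin b * Real.sin c) ≤ p*q*(b*c) :=
      mul_le_mul_of_nonneg_left (mul_le_mul hsb1 hsc1 hsc0.le hb.le) (by positivity)
    have k4 : E ≤ p*q*(b*c) - (p - p^3/6)*(q - q^3/6)*(b*c) := by
      rw [hEalt]
      have := mul_le_mul_of_nonneg_right k1 (by positivity : (0:ℝ) ≤ b*c)
      linarith
    have h5 : 0 ≤ p*q*(b*c)*((a+b+c)^2 - (p^2+q^2)) :=
      mul_nonneg (by positivity) (by linarith)
    have h6 : (0:ℝ) ≤ (p^3*q^3)*(b*c) := by positivity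
    linarith [k4, h5, h6]
  have hB2l : -(p*q*(b*c)*(a+b+c)^2/6) ≤ E := by
    have k1 : Real.sin p * Real.sin q ≤ p * q :=
      mul_le_mul hsp1 hsq1 hsq0.le hp0.le
    have k2 : p*q*((b - b^3/6)*(c - c^3/6)) ≤ p*q*(Real.sin b * Real.sin c) :=
      mul_le_mul_of_nonneg_left (mul_le_mul hsb2 hsc2 hsc4 hsb0.le) (by positivity)
    have k4 : p*q*((b - b^3/6)*(c - c^3/6)) - p*q*(b*c) ≤ E := by
      rw [hEalt]
      have := mul_le_mul_of_nonneg_right k1 (by positivity : (0:ℝ) ≤ b*c)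
      linarith
    have h5 : 0 ≤ p*q*(b*c)*((a+b+c)^2 - (b^2+c^2)) :=
      mul_nonneg (by positivity) (by linarith)
    have h6 : (0:ℝ) ≤ p*q*(b^3*c^3) := by positivity
    linarith [k4, h5, h6]
  -- E^2 bound
  have habs1 : |E| ≤ u*v*(b*c)*(a+b+c)^2/6 := abs_le.2 ⟨hB1l, hB1u⟩
  have habs2 : |E| ≤ p*q*(b*c)*(a+b+c)^2/6 := abs_le.2 ⟨hB2l, hB2u⟩
  have hEsq : E^2 ≤ (u*v)*(p*q)*((b*c)*(a+b+c)^2)^2/36 := by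
    calc E^2 = |E| * |E| := by rw [abs_mul_abs_self, sq]
      _ ≤ (u*v*(b*c)*(a+b+c)^2/6) * (p*q*(b*c)*(a+b+c)^2/6) :=
          mul_le_mul habs1 habs2 (abs_nonneg E) (by positivity)
      _ = (u*v)*(p*q)*((b*c)*(a+b+c)^2)^2/36 := by ring
  -- Heron-type identities
  have hXsq : (1 - X^2)*(b*c)^2 = 4*((p*q)*(u*v)) := by
    calc (1 - X^2)*(b*c)^2 = ((1-X)*(b*c))*((1+X)*(b*c)) := by ring
      _ = (2*(u*v))*(2*(p*q)) := by rw [hX1, hX2]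
      _ = 4*((p*q)*(u*v)) := by ring
  have hYsq : (1 - Y^2)*(Real.sin b * Real.sin c)^2
      = 4*((Real.sin p * Real.sin q)*(Real.sin u * Real.sin v)) := by
    calc (1 - Y^2)*(Real.sin b * Real.sin c)^2
        = ((1-Y)*(Real.sin b * Real.sin c))*((1+Y)*(Real.sin b * Real.sin c)) := by ring
      _ = (2*(Real.sin u * Real.sin v))*(2*(Real.sin p * Real.sin q)) := by rw [hY1, hY2]
      _ = 4*((Real.sin p * Real.sin q)*(Real.sin u * Real.sin v)) := by ring
  have hpquv : 0 < (p*q)*(u*v) := mul_pos (mul_pos hp0 hq0) (mul_pos hu0 hv0)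
  have hspquv : 0 < (Real.sin p * Real.sin q)*(Real.sin u * Real.sin v) :=
    mul_pos (mul_pos hsp0 hsq0) (mul_pos hsu0 hsv0)
  have hX2lt : 0 < 1 - X^2 := by
    have hD : ((b*c)^2 : ℝ) ≠ 0 := by positivity
    have h : 1 - X^2 = 4*((p*q)*(u*v))/(b*c)^2 := by rw [eq_div_iff hD]; exact hXsq
    rw [h]; positivity
  have hY2lt : 0 < 1 - Y^2 := by
    have hD : ((Real.sin b * Real.sin c)^2 : ℝ) ≠ 0 := by positivity
    have h : 1 - Y^2 = 4*((Real.sin p * Real.sin q)*(Real.sin u * Real.sin v))/(Real.sin b * Real.sin c)^2 := by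
      rw [eq_div_iff hD]; exact hYsq
    rw [h]; positivity
  -- difference identity
  have hYX : (Y - X) * ((b*c)*(Real.sin b * Real.sin c)) = -(2*E) := by
    linear_combination (Real.sin b * Real.sin c) * hX1 - (b*c) * hY1 + 2 * hE
  have hYXsq : (Y - X)^2 * ((b*c)*(Real.sin b * Real.sin c))^2 = 4*E^2 := by
    linear_combination ((Y - X) * ((b*c)*(Real.sin b * Real.sin c)) - 2*E) * hYX
  -- comparison of sines with their arguments, squared
  have hbc4 : (b*c)^2 ≤ 16*(Real.sin b * Real.sin c)^2 := by
    have h1 : b*c ≤ (2*Real.sin b)*(2*Real.sin c) := mul_le_mul hsb3 hsc3 hc.le (by positivity)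
    have h2 := mul_self_le_mul_self (by positivity : (0:ℝ) ≤ b*c) h1
    linarith [h2]
  have hquarter : (p*q)*(u*v) ≤ 16*((Real.sin p * Real.sin q)*(Real.sin u * Real.sin v)) := by
    have t1 : p*q ≤ 4*(Real.sin p * Real.sin q) := by
      have := mul_le_mul hsp3 hsq3 hq0.le (by positivity : (0:ℝ) ≤ 2*Real.sin p)
      linarith [this]
    have t2 : u*v ≤ 4*(Real.sin u * Real.sin v) := by
      have := mul_le_mul hsu3 hsv3 hv0.le (by positivity : (0:ℝ) ≤ 2*Real.sin u)
      linarith [this]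
    have := mul_le_mul t1 t2 (by positivity) (by positivity)
    linarith [this]
  -- goal A : (Y-X)^2 <= 4 S^4 (1 - X^2)
  have hposDS : (0:ℝ) < ((b*c)*(Real.sin b * Real.sin c))^2 := by positivity
  have hGA : (Y - X)^2 ≤ 4*(a+b+c)^4*(1 - X^2) := by
    have hR : (4*(a+b+c)^4*(1 - X^2)) * ((b*c)*(Real.sin b * Real.sin c))^2
        = 16*(a+b+c)^4*((p*q)*(u*v))*(Real.sin b * Real.sin c)^2 := by
      linear_combination (4*(a+b+c)^4*(Real.sin b * Real.sin c)^2) * hXsq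
    have hm : (0:ℝ) ≤ (u*v)*(p*q)*(a+b+c)^4 := by positivity
    have hmm := mul_le_mul_of_nonneg_left hbc4 hm
    have step : (Y - X)^2 * ((b*c)*(Real.sin b * Real.sin c))^2
        ≤ (4*(a+b+c)^4*(1 - X^2)) * ((b*c)*(Real.sin b * Real.sin c))^2 := by
      rw [hYXsq, hR]
      have hMn : (0:ℝ) ≤ (u*v)*(p*q)*(a+b+c)^4*(Real.sin b * Real.sin c)^2 := by positivity
      linarith [hEsq, hmm, hMn]
    exact le_of_mul_le_mul_right step hposDS
  -- goal B : (Y-X)^2 <= 4 S^4 (1 - Y^2)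
  have hGB : (Y - X)^2 ≤ 4*(a+b+c)^4*(1 - Y^2) := by
    have hR : (4*(a+b+c)^4*(1 - Y^2)) * ((b*c)*(Real.sin b * Real.sin c))^2
        = 16*(a+b+c)^4*((Real.sin p * Real.sin q)*(Real.sin u * Real.sin v))*(b*c)^2 := by
      linear_combination (4*(a+b+c)^4*(b*c)^2) * hYsq
    have hm : (0:ℝ) ≤ (a+b+c)^4*(b*c)^2 := by positivity
    have hmm := mul_le_mul_of_nonneg_left hquarter hm
    have step : (Y - X)^2 * ((b*c)*(Real.sin b * Real.sin c))^2
        ≤ (4*(a+b+c)^4*(1 - Y^2)) * ((b*c)*(Real.sin b * Real.sin c))^2 := by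
      rw [hYXsq, hR]
      have hMn : (0:ℝ) ≤ (a+b+c)^4*(b*c)^2*((Real.sin p * Real.sin q)*(Real.sin u * Real.sin v)) := by positivity
      linarith [hEsq, hmm, hMn]
    exact le_of_mul_le_mul_right step hposDS
  -- combine
  set K := min (1 - X^2) (1 - Y^2) with hK
  clear_value K
  have hK0 : 0 < K := by rw [hK]; exact lt_min hX2lt hY2lt
  have hsqK : (Y - X)^2 ≤ (2*(a+b+c)^2)^2 * K := by
    rcases le_total (1 - X^2) (1 - Y^2) with h|h
    · rw [hK, min_eq_left h]; linarith [hGA]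
    · rw [hK, min_eq_right h]; linarith [hGB]
  have habsYX : |Y - X| ≤ 2*(a+b+c)^2 * Real.sqrt K := by
    have h1 : |Y - X| = Real.sqrt ((Y - X)^2) := (Real.sqrt_sq_eq_abs _).symm
    have h2 : 2*(a+b+c)^2 * Real.sqrt K = Real.sqrt ((2*(a+b+c)^2)^2 * K) := by
      rw [Real.sqrt_mul (by positivity), Real.sqrt_sq (by positivity)]
    rw [h1, h2]
    exact Real.sqrt_le_sqrt hsqK
  have final := my_arccos_lip hK0 (by rw [hK]; exact min_le_left _ _) (by rw [hK]; exact min_le_right _ _)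
  have hsK : 0 < Real.sqrt K := Real.sqrt_pos.2 hK0
  calc |Real.arccos Y - Real.arccos X| ≤ |Y - X| / Real.sqrt K := final
    _ ≤ (2*(a+b+c)^2 * Real.sqrt K) / Real.sqrt K := by
        gcongr
    _ = 2*(a+b+c)^2 := by field_simp
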